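/- Let G=(V,E) be a finite simple graph with a partition V = A ∪ B ∪ C satisfying: every a ∈ A has d_B(a) ≥ d_A(a) + max{1, d_C(a)} and every b ∈ B has d_A(b) ≥ d_B(b) + max{1, d_C(b)}. Then #E(A∪B, C) + 2·#E(A,A) + 2·#E(B,B) ≤ 2·#E(A,B). -/

import Mathlib

open Finset

variable {V : Type*} [Fintype V] [DecidableEq V]

/-- Number of neighbors of `v` lying in `S`. -/
def degIn (G : SimpleGraph V) [DecidableRel G.Adj] (v : V) (S : Finset V) : ℕ :=
  (S.filter (G.Adj v)).card

/-- Number of edges with one endpoint in `X` and the other in `Y`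
(each edge counted once; for `X = Y` this is the number of edges inside `X`). -/
def eBtw (G : SimpleGraph V) [DecidableRel G.Adj] (X Y : Finset V) : ℕ :=
  (G.edgeFinset.filter (fun e => ∃ x ∈ X, ∃ y ∈ Y, e = s(x, y))).card

lemma pairs_card (G : SimpleGraph V) [DecidableRel G.Adj] (X Y : Finset V) :
    ((X ×ˢ Y).filter fun p => G.Adj p.1 p.2).card = ∑ x ∈ X, degIn G x Y := by
  rw [Finset.card_eq_sum_card_fiberwise (f := Prod.fst) (t := X)
    (fun p hp => (Finset.mem_product.1 (Finset.mem_filter.1 hp).1).1)]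
  refine Finset.sum_congr rfl fun x hx => ?_
  rw [degIn]
  refine Finset.card_bij' (fun q _ => q.2) (fun y _ => (x, y)) ?_ ?_ ?_ ?_
  · intro q hq
    simp only [Finset.mem_filter, Finset.mem_product] at hq ⊢
    obtain ⟨⟨⟨_, hy⟩, ha⟩, hfst⟩ := hq
    subst hfst
    exact ⟨hy, ha⟩
  · intro y hy
    simp only [Finset.mem_filter, Finset.mem_product] at hy ⊢
    exact ⟨⟨⟨hx, hy.1⟩, hy.2⟩, trivial⟩
  · intro q hq
    simp only [Finset.mem_filter] at hq
    exact Prod.ext hq.2.symm rfl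
  · intro y hy
    rfl

lemma pairs_card_eBtw (G : SimpleGraph V) [DecidableRel G.Adj] {X Y : Finset V}
    (hXY : Disjoint X Y) :
    ((X ×ˢ Y).filter fun p => G.Adj p.1 p.2).card = eBtw G X Y := by
  rw [eBtw]
  apply Finset.card_bij (fun q _ => s(q.1, q.2))
  · intro q hq
    simp only [Finset.mem_filter, Finset.mem_product] at hq
    simp only [Finset.mem_filter, SimpleGraph.mem_edgeFinset, SimpleGraph.mem_edgeSet]
    exact ⟨hq.2, q.1, hq.1.1, q.2, hq.1.2, rfl⟩
  · intro q hq q' hq' h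
    simp only [Finset.mem_filter, Finset.mem_product] at hq hq'
    rcases Sym2.eq_iff.1 h with ⟨h1, h2⟩ | ⟨h1, h2⟩
    · exact Prod.ext h1 h2
    · exact absurd hq.1.1 (Finset.disjoint_left.1 hXY.symm (h1 ▸ hq'.1.2))
  · intro e he
    simp only [Finset.mem_filter, SimpleGraph.mem_edgeFinset] at he
    obtain ⟨hadj, x, hx, y, hy, rfl⟩ := he
    refine ⟨(x, y), ?_, rfl⟩
    simp only [Finset.mem_filter, Finset.mem_product]
    exact ⟨⟨hx, hy⟩, (SimpleGraph.mem_edgeSet G).1 hadj⟩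

lemma sum_degIn_disj (G : SimpleGraph V) [DecidableRel G.Adj] {X Y : Finset V}
    (hXY : Disjoint X Y) : ∑ x ∈ X, degIn G x Y = eBtw G X Y := by
  rw [← pairs_card, pairs_card_eBtw G hXY]

lemma sum_degIn_self (G : SimpleGraph V) [DecidableRel G.Adj] (X : Finset V) :
    ∑ x ∈ X, degIn G x X = 2 * eBtw G X X := by
  rw [← pairs_card, eBtw]
  rw [Finset.card_eq_sum_card_fiberwise (f := fun p => s(p.1, p.2))
    (t := G.edgeFinset.filter (fun e => ∃ x ∈ X, ∃ y ∈ X, e = s(x, y)))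
    (fun p hp => by
      simp only [Finset.mem_coe, Finset.mem_filter, Finset.mem_product] at hp
      simp only [Finset.mem_coe, Finset.mem_filter, SimpleGraph.mem_edgeFinset, SimpleGraph.mem_edgeSet]
      exact ⟨hp.2, p.1, hp.1.1, p.2, hp.1.2, rfl⟩)]
  rw [Finset.sum_const_nat (m := 2) ?_, Nat.mul_comm]
  intro e he
  simp only [Finset.mem_filter, SimpleGraph.mem_edgeFinset] at he
  obtain ⟨hadj, x, hx, y, hy, rfl⟩ := he
  have hxy : G.Adj x y := (SimpleGraph.mem_edgeSet G).1 hadj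
  have hne : x ≠ y := hxy.ne
  have hset : ((X ×ˢ X).filter fun p => G.Adj p.1 p.2).filter
      (fun p => s(p.1, p.2) = s(x, y)) = {(x, y), (y, x)} := by
    ext p
    simp only [Finset.mem_filter, Finset.mem_product, Finset.mem_insert,
      Finset.mem_singleton, Sym2.eq_iff]
    constructor
    · rintro ⟨-, (⟨h1, h2⟩ | ⟨h1, h2⟩)⟩
      · left; exact Prod.ext h1 h2
      · right; exact Prod.ext h1 h2
    · rintro (rfl | rfl)
      · exact ⟨⟨⟨hx, hy⟩, hxy⟩, Or.inl ⟨rfl, rfl⟩⟩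
      · exact ⟨⟨⟨hy, hx⟩, hxy.symm⟩, Or.inr ⟨rfl, rfl⟩⟩
  rw [hset, Finset.card_insert_of_notMem (by simp [hne]), Finset.card_singleton]

lemma eBtw_comm (G : SimpleGraph V) [DecidableRel G.Adj] (X Y : Finset V) :
    eBtw G X Y = eBtw G Y X := by
  unfold eBtw
  congr 1
  ext e
  simp only [Finset.mem_filter]
  constructor <;> rintro ⟨he, x, hx, y, hy, rfl⟩ <;>
    exact ⟨he, y, hy, x, hx, Sym2.eq_swap⟩

lemma eBtw_union_left (G : SimpleGraph V) [DecidableRel G.Adj] {X Y Z : Finset V}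
    (hXY : Disjoint X Y) (hXZ : Disjoint X Z) (hYZ : Disjoint Y Z) :
    eBtw G (X ∪ Y) Z = eBtw G X Z + eBtw G Y Z := by
  rw [← sum_degIn_disj G hXZ, ← sum_degIn_disj G hYZ,
    ← sum_degIn_disj G (Finset.disjoint_union_left.2 ⟨hXZ, hYZ⟩),
    Finset.sum_union hXY]

theorem global_edge_inequality (G : SimpleGraph V) [DecidableRel G.Adj]
    (A B C : Finset V)
    (hU : A ∪ B ∪ C = Finset.univ)
    (hAB : Disjoint A B) (hAC : Disjoint A C) (hBC : Disjoint B C)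
    (h1 : ∀ a ∈ A, degIn G a A + max 1 (degIn G a C) ≤ degIn G a B)
    (h2 : ∀ b ∈ B, degIn G b B + max 1 (degIn G b C) ≤ degIn G b A) :
    eBtw G (A ∪ B) C + 2 * eBtw G A A + 2 * eBtw G B B ≤ 2 * eBtw G A B := by
  have sA : 2 * eBtw G A A + eBtw G A C ≤ eBtw G A B := by
    rw [← sum_degIn_disj G hAB, ← sum_degIn_disj G hAC, ← sum_degIn_self G A,
      ← Finset.sum_add_distrib]
    refine Finset.sum_le_sum fun a ha => ?_
    exact le_trans (Nat.add_le_add_left (le_max_right _ _) _) (h1 a ha)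
  have sB : 2 * eBtw G B B + eBtw G B C ≤ eBtw G A B := by
    rw [eBtw_comm G A B, ← sum_degIn_disj G hAB.symm, ← sum_degIn_disj G hBC,
      ← sum_degIn_self G B, ← Finset.sum_add_distrib]
    refine Finset.sum_le_sum fun b hb => ?_
    exact le_trans (Nat.add_le_add_left (le_max_right _ _) _) (h2 b hb)
  rw [eBtw_union_left G hAB hAC hBC]
  omega
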